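/- Let A be a regular subalgebra of a C*-algebra B. Then A satisfies axiom (inv): for every closed two-sided ideal J of B, the ideal J ∩ A of A is B-invariant ([（J∩A)B] = [B(J∩A)]). -/

import Mathlib

open Pointwise

variable {B : Type*} [NonUnitalCStarAlgebra B]

/-- Closed linear span of a subset of `B`. -/
def clSpan (S : Set B) : Set B := closure (Submodule.span ℂ S : Set B)

/-- `S` is `B`-invariant if `[SB] = [BS]`. -/
def BInvariant (S : Set B) : Prop :=
  clSpan (S * (Set.univ : Set B)) = clSpan ((Set.univ : Set B) * S)

/-- The closed two-sided ideal of `B` generated by `S`, namely `[BSB]`. -/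
def idealGen (S : Set B) : Set B :=
  clSpan ((Set.univ : Set B) * S * (Set.univ : Set B))

/-- Two-sided annihilator of `S` computed in `B`. -/
def annB (S : Set B) : Set B := {x | ∀ s ∈ S, x * s = 0 ∧ s * x = 0}

/-- Two-sided annihilator of `S` computed inside the subset `A ⊆ B`. -/
def annIn (A S : Set B) : Set B := {x ∈ A | ∀ s ∈ S, x * s = 0 ∧ s * x = 0}

/-- A closed *-subalgebra of `B`, regarded as a subset. -/
structure ClosedStarSubalgebra (A : Set B) : Prop where
  isClosed : IsClosed A
  zero_mem : (0 : B) ∈ A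
  add_mem : ∀ ⦃x y : B⦄, x ∈ A → y ∈ A → x + y ∈ A
  smul_mem : ∀ (c : ℂ) ⦃x : B⦄, x ∈ A → c • x ∈ A
  mul_mem : ∀ ⦃x y : B⦄, x ∈ A → y ∈ A → x * y ∈ A
  star_mem : ∀ ⦃x : B⦄, x ∈ A → star x ∈ A

/-- A norm-closed two-sided ideal of `B`. -/
structure ClosedTwoSidedIdeal (J : Set B) : Prop where
  isClosed : IsClosed J
  zero_mem : (0 : B) ∈ J
  add_mem : ∀ ⦃x y : B⦄, x ∈ J → y ∈ J → x + y ∈ J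
  smul_mem : ∀ (c : ℂ) ⦃x : B⦄, x ∈ J → c • x ∈ J
  mul_mem_left : ∀ (a : B) ⦃x : B⦄, x ∈ J → a * x ∈ J
  mul_mem_right : ∀ (a : B) ⦃x : B⦄, x ∈ J → x * a ∈ J

/-- A norm-closed two-sided ideal of the subalgebra `A ⊆ B`. -/
structure IdealOf (A J : Set B) : Prop where
  subset : J ⊆ A
  isClosed : IsClosed J
  zero_mem : (0 : B) ∈ J
  add_mem : ∀ ⦃x y : B⦄, x ∈ J → y ∈ J → x + y ∈ J
  smul_mem : ∀ (c : ℂ) ⦃x : B⦄, x ∈ J → c • x ∈ J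
  mul_mem_left : ∀ ⦃a : B⦄, a ∈ A → ∀ ⦃x : B⦄, x ∈ J → a * x ∈ J
  mul_mem_right : ∀ ⦃a : B⦄, a ∈ A → ∀ ⦃x : B⦄, x ∈ J → x * a ∈ J

/-- The ideal intersection property: every nonzero closed two-sided ideal of `B`
meets `A` nontrivially. -/
def IdealIntersectionProperty (A : Set B) : Prop :=
  ∀ J : Set B, ClosedTwoSidedIdeal J → J ≠ {0} → J ∩ A ≠ {0}

/-- Axiom (inv): `J ∩ A` is `B`-invariant for every closed two-sided ideal `J` of `B`. -/
def AxiomInv (A : Set B) : Prop :=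
  ∀ J : Set B, ClosedTwoSidedIdeal J → BInvariant (J ∩ A)

/-- A regular ideal of `B`. -/
def RegularIdealB (J : Set B) : Prop :=
  ClosedTwoSidedIdeal J ∧ annB (annB J) = J

/-- A regular ideal of the subalgebra `A`. -/
def RegularIdealIn (A I : Set B) : Prop :=
  IdealOf A I ∧ annIn A (annIn A I) = I

/-- A normalizer of `A` in `B`. -/
def IsNormalizer (A : Set B) (n : B) : Prop :=
  (∀ a ∈ A, star n * a * n ∈ A) ∧ (∀ a ∈ A, n * a * star n ∈ A)

/-- `A` contains an approximate unit for `B`. -/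
def ContainsApproxUnit (A : Set B) : Prop :=
  ∃ (ι : Type) (l : Filter ι) (e : ι → B), l.NeBot ∧ (∀ i, e i ∈ A) ∧
    ∀ b : B, Filter.Tendsto (fun i => e i * b) l (nhds b) ∧
      Filter.Tendsto (fun i => b * e i) l (nhds b)

/-- `A` is a regular subalgebra of `B`: the normalizers span a dense subspace of
`B` and `A` contains an approximate unit for `B`. -/
def RegularSubalgebra (A : Set B) : Prop :=
  ClosedStarSubalgebra A ∧ clSpan {n : B | IsNormalizer A n} = Set.univ ∧
    ContainsApproxUnit A

private lemma approx_right (m : B) {ε : ℝ} (hε : 0 < ε) :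
    ∃ c : B, ‖m - m * c * (star m * m)‖ < ε := by
  obtain ⟨n, hn⟩ := exists_nat_gt (1 / (2 * ε ^ 2))
  set K : ℝ := n + 1 with hKdef
  have hK : 0 < K := by positivity
  set a : B := star m * m with ha
  have hsa : IsSelfAdjoint a := IsSelfAdjoint.star_mul_self m
  set q : ℝ → ℝ := fun t => K ^ 2 * t / (1 + K ^ 2 * t ^ 2) with hq
  set h : ℝ → ℝ := fun t => K ^ 2 * t ^ 2 / (1 + K ^ 2 * t ^ 2) with hh
  have hden : ∀ t : ℝ, (0:ℝ) < 1 + K ^ 2 * t ^ 2 := fun t => by positivity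
  have hqc : Continuous q := Continuous.div (by fun_prop) (by fun_prop) (fun t => (hden t).ne')
  have hhc : Continuous h := Continuous.div (by fun_prop) (by fun_prop) (fun t => (hden t).ne')
  have hq0 : q 0 = 0 := by simp [hq]
  have hh0 : h 0 = 0 := by simp [hh]
  refine ⟨cfcₙ q a, ?_⟩
  set x : B := cfcₙ h a with hx
  have hxsa : IsSelfAdjoint x := cfcₙ_predicate h a
  have hfact : m * cfcₙ q a * a = m * x := by
    rw [mul_assoc]
    congr 1
    calc cfcₙ q a * a = cfcₙ q a * cfcₙ (id : ℝ → ℝ) a := by rw [cfcₙ_id ℝ a]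
    _ = cfcₙ (fun t => q t * t) a := (cfcₙ_mul _ _ a (by fun_prop) (by simp [hq]) (by fun_prop) (by simp)).symm
    _ = x := by
        rw [hx]
        apply cfcₙ_congr
        intro t ht
        simp only [hq, hh]
        ring
  rw [hfact]
  -- norm squared computation
  have key : star (m - m * x) * (m - m * x) = cfcₙ (fun t => t * (1 - h t) ^ 2) a := by
    have hstar : star (m - m * x) = star m - x * star m := by
      simp [star_sub, star_mul, hxsa.star_eq]
    rw [hstar]
    have expand : (star m - x * star m) * (m - m * x)
        = a - a * x - (x * a - x * (a * x)) := by
      simp only [sub_mul, mul_sub, ha, mul_assoc]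
      abel
    rw [expand]
    have hax : a * x = cfcₙ (fun t => t * h t) a := by
      conv_lhs => rw [← cfcₙ_id ℝ a]
      exact (cfcₙ_mul _ _ a (by fun_prop) (by simp) (by fun_prop) (by simp [hh])).symm
    have hxa : x * a = cfcₙ (fun t => h t * t) a := by
      conv_lhs => rw [← cfcₙ_id ℝ a]
      exact (cfcₙ_mul _ _ a (by fun_prop) (by simp [hh]) (by fun_prop) (by simp)).symm
    have hxax : x * (a * x) = cfcₙ (fun t => h t * (t * h t)) a := by
      rw [hax, hx]
      exact (cfcₙ_mul _ _ a (by fun_prop) (by simp [hh]) (by fun_prop) (by simp [hh])).symm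
    rw [hxax, hxa, hax]
    have final : cfcₙ (fun t : ℝ => t) a - cfcₙ (fun t => t * h t) a -
        (cfcₙ (fun t => h t * t) a - cfcₙ (fun t => h t * (t * h t)) a)
        = cfcₙ (fun t => t * (1 - h t) ^ 2) a := by
      rw [← cfcₙ_sub (fun t : ℝ => h t * t) (fun t => h t * (t * h t)) a (by fun_prop)
            (by simp [hh]) (by fun_prop) (by simp [hh]),
          ← cfcₙ_sub (fun t : ℝ => t) (fun t => t * h t) a (by fun_prop)
            (by simp) (by fun_prop) (by simp [hh]),
          ← cfcₙ_sub (fun t : ℝ => t - t * h t) (fun t => h t * t - h t * (t * h t)) a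
            (by fun_prop) (by simp [hh]) (by fun_prop) (by simp [hh])]
      apply cfcₙ_congr
      intro t ht
      ring
    rw [cfcₙ_id' ℝ a] at final
    exact final
  -- norm bound
  have hbound : ‖cfcₙ (fun t => t * (1 - h t) ^ 2) a‖ ≤ 1 / (2 * K) := by
    apply norm_cfcₙ_le
    intro t ht
    have h1 : (1 : ℝ) - h t = 1 / (1 + K ^ 2 * t ^ 2) := by
      simp only [hh]
      rw [eq_div_iff (hden t).ne', sub_mul, div_mul_cancel₀ _ (hden t).ne']
      ring
    rw [h1]
    have h2K : 2 * K * |t| ≤ 1 + K ^ 2 * t ^ 2 := by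
      nlinarith [sq_nonneg (K * |t| - 1), sq_abs t]
    rw [Real.norm_eq_abs, abs_mul, abs_pow, abs_div, abs_one,
        abs_of_pos (hden t)]
    rw [div_pow, one_pow, mul_one_div, div_le_div_iff₀ (by positivity) (by positivity)]
    have hD1 : (1:ℝ) ≤ 1 + K ^ 2 * t ^ 2 := by nlinarith [sq_nonneg (K * t)]
    nlinarith [hden t, abs_nonneg t]
  have hnormsq : ‖m - m * x‖ * ‖m - m * x‖ ≤ 1 / (2 * K) := by
    rw [← CStarRing.norm_star_mul_self, key]
    exact hbound
  have hKε : 1 / (2 * K) < ε ^ 2 := by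
    rw [div_lt_iff₀ (by positivity)]
    rw [div_lt_iff₀ (by positivity)] at hn
    nlinarith [Nat.cast_nonneg (α := ℝ) n]
  have : ‖m - m * x‖ ^ 2 < ε ^ 2 := by
    rw [sq]
    exact lt_of_le_of_lt hnormsq hKε
  exact lt_of_pow_lt_pow_left₀ 2 hε.le this

private lemma dense_normalizers_apply (A : Set B)
    (hdense : clSpan {n : B | IsNormalizer A n} = Set.univ)
    (T : Submodule ℂ B) (L : B →L[ℂ] B)
    (hN : ∀ n : B, IsNormalizer A n → L n ∈ T.topologicalClosure) (b : B) :
    L b ∈ T.topologicalClosure := by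
  have h1 : {n : B | IsNormalizer A n} ⊆
      ((T.topologicalClosure.comap (L : B →ₗ[ℂ] B)) : Set B) := fun n hn => hN n hn
  have h2 : (Submodule.span ℂ {n : B | IsNormalizer A n} : Set B) ⊆
      ((T.topologicalClosure.comap (L : B →ₗ[ℂ] B)) : Set B) := Submodule.span_le.mpr h1
  have h3 : IsClosed ((T.topologicalClosure.comap (L : B →ₗ[ℂ] B)) : Set B) :=
    T.isClosed_topologicalClosure.preimage L.continuous
  have hb : b ∈ closure (Submodule.span ℂ {n : B | IsNormalizer A n} : Set B) := by
    show b ∈ clSpan {n : B | IsNormalizer A n}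
    rw [hdense]; trivial
  exact closure_minimal h2 h3 hb

/-- A regular subalgebra satisfies axiom (inv). -/
theorem stmt16 (A : Set B) (hreg : RegularSubalgebra A) :
    AxiomInv A := by
  obtain ⟨hA, hdense, -⟩ := hreg
  intro J hJ
  set S : Set B := J ∩ A with hSdef
  set T₁ : Submodule ℂ B := Submodule.span ℂ (S * (Set.univ : Set B)) with hT₁
  set T₂ : Submodule ℂ B := Submodule.span ℂ ((Set.univ : Set B) * S) with hT₂
  have hcl₁ : clSpan (S * (Set.univ : Set B)) = (T₁.topologicalClosure : Set B) :=
    (Submodule.topologicalClosure_coe _).symm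
  have hcl₂ : clSpan ((Set.univ : Set B) * S) = (T₂.topologicalClosure : Set B) :=
    (Submodule.topologicalClosure_coe _).symm
  -- normalizer key facts
  have claim1 : ∀ s ∈ S, ∀ b : B, s * b ∈ T₂.topologicalClosure := by
    intro s hs b
    have := dense_normalizers_apply A hdense T₂ (ContinuousLinearMap.mul ℂ B s) ?_ b
    · simpa using this
    intro n hn
    simp only [ContinuousLinearMap.mul_apply']
    set m : B := s * n with hm
    have eq1 : star m * m = star n * (star s * s) * n := by
      simp [hm, star_mul, mul_assoc]
    have hmemA : star m * m ∈ A := by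
      rw [eq1]
      exact hn.1 _ (hA.mul_mem (hA.star_mem hs.2) hs.2)
    have hmemJ : star m * m ∈ J := by
      rw [eq1]
      exact hJ.mul_mem_right n (hJ.mul_mem_left (star n) (hJ.mul_mem_left (star s) hs.1))
    have hmemS : star m * m ∈ S := ⟨hmemJ, hmemA⟩
    have : m ∈ closure (T₂.topologicalClosure : Set B) := by
      rw [Metric.mem_closure_iff]
      intro ε hε
      obtain ⟨c, hc⟩ := approx_right m hε
      refine ⟨m * c * (star m * m), ?_, ?_⟩
      · exact T₂.le_topologicalClosure <| Submodule.subset_span <|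
          Set.mul_mem_mul (Set.mem_univ (m * c)) hmemS
      · rw [dist_eq_norm]; exact hc
    rwa [T₂.isClosed_topologicalClosure.closure_eq] at this
  have claim2 : ∀ s ∈ S, ∀ b : B, b * s ∈ T₁.topologicalClosure := by
    intro s hs b
    have := dense_normalizers_apply A hdense T₁ ((ContinuousLinearMap.mul ℂ B).flip s) ?_ b
    · simpa using this
    intro n hn
    simp only [ContinuousLinearMap.flip_apply, ContinuousLinearMap.mul_apply']
    set m : B := n * s with hm
    have eq2 : m * star m = n * (s * star s) * star n := by
      simp [hm, star_mul, mul_assoc]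
    have hmemA : m * star m ∈ A := by
      rw [eq2]
      exact hn.2 _ (hA.mul_mem hs.2 (hA.star_mem hs.2))
    have hmemJ : m * star m ∈ J := by
      rw [eq2]
      exact hJ.mul_mem_right (star n) (hJ.mul_mem_left n (hJ.mul_mem_right (star s) hs.1))
    have hmemS : m * star m ∈ S := ⟨hmemJ, hmemA⟩
    have : m ∈ closure (T₁.topologicalClosure : Set B) := by
      rw [Metric.mem_closure_iff]
      intro ε hε
      obtain ⟨c, hc⟩ := approx_right (star m) hε
      rw [star_star] at hc
      refine ⟨(m * star m) * (star c * m), ?_, ?_⟩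
      · exact T₁.le_topologicalClosure <| Submodule.subset_span <|
          Set.mul_mem_mul hmemS (Set.mem_univ (star c * m))
      · rw [dist_eq_norm]
        have heq : m - m * star m * (star c * m) = star (star m - star m * c * (m * star m)) := by
          simp [star_sub, star_mul, mul_assoc]
        rw [heq, norm_star]
        exact hc
    rwa [T₁.isClosed_topologicalClosure.closure_eq] at this
  -- conclude
  show clSpan (S * Set.univ) = clSpan (Set.univ * S)
  rw [hcl₁, hcl₂]
  apply subset_antisymm
  · have hsub : S * (Set.univ : Set B) ⊆ (T₂.topologicalClosure : Set B) := by
      rintro x ⟨s, hs, b, -, rfl⟩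
      exact claim1 s hs b
    have : T₁ ≤ T₂.topologicalClosure := Submodule.span_le.mpr hsub
    calc (T₁.topologicalClosure : Set B) ⊆ closure (T₂.topologicalClosure : Set B) := by
          rw [Submodule.topologicalClosure_coe]
          exact closure_mono this
      _ = (T₂.topologicalClosure : Set B) := T₂.isClosed_topologicalClosure.closure_eq
  · have hsub : (Set.univ : Set B) * S ⊆ (T₁.topologicalClosure : Set B) := by
      rintro x ⟨b, -, s, hs, rfl⟩
      exact claim2 s hs b
    have : T₂ ≤ T₁.topologicalClosure := Submodule.span_le.mpr hsub
    calc (T₂.topologicalClosure : Set B) ⊆ closure (T₁.topologicalClosure : Set B) := by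
          rw [Submodule.topologicalClosure_coe]
          exact closure_mono this
      _ = (T₁.topologicalClosure : Set B) := T₁.isClosed_topologicalClosure.closure_eq
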